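/- For the binary input load X ~ Bernoulli(q_x) on {0,1} and average power constraint p_e ∈ [0, q_x], the privacy-power function equals I(p_e, ∞) = p_e·log₂(p_e) − q_x·log₂(q_x) − (1 − q_x + p_e)·log₂(1 − q_x + p_e), and I(p_e, ∞) = 0 for p_e > q_x. In particular, the infimum of I(X;Y) over channels p_{Y|X} with Y ≤ X and E[X−Y] ≤ p_e is given by this expression. -/

import Mathlib

open Finset Real

noncomputable section

/-- `w` is a probability mass function on the finite sample space `Ω`. -/
def IsPMF {Ω : Type*} [Fintype Ω] (w : Ω → ℝ) : Prop :=
  (∀ ω, 0 ≤ w ω) ∧ ∑ ω, w ω = 1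

/-- Distribution (pmf) of the random variable `X` under the weight `w`. -/
def rvDist {Ω A : Type*} [Fintype Ω] [DecidableEq A] (w : Ω → ℝ) (X : Ω → A) (a : A) : ℝ :=
  ∑ ω, if X ω = a then w ω else 0

/-- Shannon entropy (in bits) of `X` under `w`. -/
def Hent {Ω A : Type*} [Fintype Ω] [Fintype A] [DecidableEq A] (w : Ω → ℝ) (X : Ω → A) : ℝ :=
  -∑ a, rvDist w X a * Real.logb 2 (rvDist w X a)

/-- Conditional entropy `H(X | Z)` (in bits). -/
def Hcond {Ω A C : Type*} [Fintype Ω] [Fintype A] [Fintype C] [DecidableEq A] [DecidableEq C]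
    (w : Ω → ℝ) (X : Ω → A) (Z : Ω → C) : ℝ :=
  Hent w (fun ω => (X ω, Z ω)) - Hent w Z

/-- Mutual information `I(X;Y)` (in bits). -/
def MI {Ω A B : Type*} [Fintype Ω] [Fintype A] [Fintype B] [DecidableEq A] [DecidableEq B]
    (w : Ω → ℝ) (X : Ω → A) (Y : Ω → B) : ℝ :=
  Hent w X + Hent w Y - Hent w (fun ω => (X ω, Y ω))

/-- Conditional mutual information `I(X;Y|E)` (in bits). -/
def CMI {Ω A B C : Type*} [Fintype Ω] [Fintype A] [Fintype B] [Fintype C]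
    [DecidableEq A] [DecidableEq B] [DecidableEq C]
    (w : Ω → ℝ) (X : Ω → A) (Y : Ω → B) (E : Ω → C) : ℝ :=
  Hent w (fun ω => (X ω, E ω)) + Hent w (fun ω => (Y ω, E ω))
    - Hent w (fun ω => (X ω, Y ω, E ω)) - Hent w E

/-- `X` and `E` are independent under `w`. -/
def IndepRV {Ω A C : Type*} [Fintype Ω] [DecidableEq A] [DecidableEq C]
    (w : Ω → ℝ) (X : Ω → A) (E : Ω → C) : Prop :=
  ∀ a c, rvDist w (fun ω => (X ω, E ω)) (a, c) = rvDist w X a * rvDist w E c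

/-- Expected energy drawn from the alternative source, `E[X - Y]`, under channel `K`. -/
def avgDraw {ι : Type*} [Fintype ι] (v p : ι → ℝ) (K : ι → ι → ℝ) : ℝ :=
  ∑ x, ∑ y, p x * K x y * (v x - v y)

/-- `K` is a channel: nonnegative, rows summing to one, and feasible: `Y ≤ X` pointwise. -/
def IsChannel {ι : Type*} [Fintype ι] (v : ι → ℝ) (K : ι → ι → ℝ) : Prop :=
  (∀ x y, 0 ≤ K x y) ∧ (∀ x, ∑ y, K x y = 1) ∧ (∀ x y, 0 < K x y → 0 ≤ v x - v y)

/-- Mutual information `I(X;Y)` induced by the input pmf `p` and the channel `K`. -/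
def chanMI {ι : Type*} [Fintype ι] [DecidableEq ι] (p : ι → ℝ) (K : ι → ι → ℝ) : ℝ :=
  MI (fun xy : ι × ι => p xy.1 * K xy.1 xy.2) Prod.fst Prod.snd

/-- Privacy-power function with an average power constraint only: `I(P̄, ∞)`. -/
def ppfAvg {ι : Type*} [Fintype ι] [DecidableEq ι] (v p : ι → ℝ) (Pbar : ℝ) : ℝ :=
  sInf {r | ∃ K : ι → ι → ℝ, IsChannel v K ∧
    0 ≤ avgDraw v p K ∧ avgDraw v p K ≤ Pbar ∧ r = chanMI p K}

/-- Privacy-power function with average and peak power constraints: `I(P̄, P̂)`. -/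
def ppfBoth {ι : Type*} [Fintype ι] [DecidableEq ι] (v p : ι → ℝ) (Pbar Phat : ℝ) : ℝ :=
  sInf {r | ∃ K : ι → ι → ℝ, IsChannel v K ∧
    (∀ x y, 0 < K x y → v x - v y ≤ Phat) ∧
    0 ≤ avgDraw v p K ∧ avgDraw v p K ≤ Pbar ∧ r = chanMI p K}

/-- Real value of a binary load level. -/
def b2r (b : Bool) : ℝ := if b then 1 else 0

/-- Bernoulli pmf on `Bool` with success probability `q`. -/
def bern (q : ℝ) (b : Bool) : ℝ := if b then q else 1 - q

/-- Binary entropy function (in bits). -/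
def binEnt (p : ℝ) : ℝ := -(p * Real.logb 2 p) - (1 - p) * Real.logb 2 (1 - p)


lemma F_anti (q : ℝ) (hq1 : q < 1) :
    AntitoneOn (fun t => t * Real.logb 2 t - q * Real.logb 2 q
      - (1 - q + t) * Real.logb 2 (1 - q + t)) (Set.Icc (0:ℝ) 1) := by
  have ha : (0:ℝ) < 1 - q := by linarith
  have hlog2 : (0:ℝ) < Real.log 2 := Real.log_pos (by norm_num)
  have key : ∀ t, t * Real.logb 2 t - q * Real.logb 2 q - (1 - q + t) * Real.logb 2 (1 - q + t)
      = (t * Real.log t - (1 - q + t) * Real.log (1 - q + t) - q * Real.log q) / Real.log 2 := by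
    intro t; simp [Real.logb]; ring
  have main : AntitoneOn (fun t => (t * Real.log t - (1 - q + t) * Real.log (1 - q + t)
      - q * Real.log q) / Real.log 2) (Set.Icc (0:ℝ) 1) := by
    have hcont : ContinuousOn (fun t => (t * Real.log t - (1 - q + t) * Real.log (1 - q + t)
        - q * Real.log q) / Real.log 2) (Set.Icc (0:ℝ) 1) := by
      apply ContinuousOn.div_const
      apply ContinuousOn.sub
      apply ContinuousOn.sub (Real.continuous_mul_log.continuousOn)
      · exact ((Real.continuous_mul_log.comp (continuous_const.add continuous_id)).continuousOn)
      · exact continuousOn_const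
    have hder : ∀ t ∈ interior (Set.Icc (0:ℝ) 1),
        HasDerivAt (fun t => (t * Real.log t - (1 - q + t) * Real.log (1 - q + t)
          - q * Real.log q) / Real.log 2)
          ((Real.log t + 1 - (Real.log (1 - q + t) + 1)) / Real.log 2) t := by
      intro t ht
      rw [interior_Icc] at ht
      have ht0 : (0:ℝ) < t := ht.1
      have htq : (0:ℝ) < 1 - q + t := by linarith
      apply HasDerivAt.div_const
      apply HasDerivAt.sub_const
      apply HasDerivAt.sub (Real.hasDerivAt_mul_log ht0.ne')
      have h2 : HasDerivAt (fun t : ℝ => 1 - q + t) 1 t := by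
        simpa using (hasDerivAt_id t).const_add (1 - q)
      exact ((Real.hasDerivAt_mul_log htq.ne').comp t h2).congr_deriv (by ring)
    apply antitoneOn_of_deriv_nonpos (convex_Icc 0 1) hcont
    · intro t ht
      exact (hder t ht).differentiableAt.differentiableWithinAt
    · intro t ht
      rw [(hder t ht).deriv]
      apply div_nonpos_of_nonpos_of_nonneg _ hlog2.le
      have ht' := ht
      rw [interior_Icc] at ht'
      have := Real.log_le_log ht'.1 (by linarith : t ≤ 1 - q + t)
      linarith
  intro a ha' b hb' hab
  simp only
  rw [key, key]
  exact main ha' hb' hab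

lemma chan_facts (K : Bool → Bool → ℝ) (hK : IsChannel b2r K) :
    K false true = 0 ∧ K false false = 1 ∧ K true true = 1 - K true false ∧
      0 ≤ K true false ∧ K true false ≤ 1 := by
  obtain ⟨hnn, hrow, hfeas⟩ := hK
  have h1 : K false true = 0 := by
    by_contra h
    have hpos : 0 < K false true := lt_of_le_of_ne (hnn false true) (Ne.symm h)
    have := hfeas false true hpos
    simp [b2r] at this
    linarith
  have hrf := hrow false
  have hrt := hrow true
  rw [Fintype.sum_bool] at hrf hrt
  refine ⟨h1, by linarith, by linarith, hnn true false, ?_⟩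
  have := hnn true true
  linarith

lemma avgDraw_eq (q : ℝ) (K : Bool → Bool → ℝ) (h1 : K false true = 0) :
    avgDraw b2r (bern q) K = q * K true false := by
  simp [avgDraw, b2r, bern, Fintype.sum_bool, h1]

lemma chanMI_eq (q : ℝ) (K : Bool → Bool → ℝ)
    (h1 : K false true = 0) (h2 : K false false = 1) (h3 : K true true = 1 - K true false) :
    chanMI (bern q) K =
      (q * K true false) * Real.logb 2 (q * K true false) - q * Real.logb 2 q
        - (1 - q + q * K true false) * Real.logb 2 (1 - q + q * K true false) := by
  simp only [chanMI, MI, Hent, rvDist, bern, Fintype.sum_prod_type, Fintype.sum_bool]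
  simp [h1, h2, h3]
  ring_nf

/-- for a binary input load `X ~ Bernoulli(q)` and average constraint `p_e`,
the privacy-power function `I(p_e, ∞)` equals
`p_e log₂ p_e − q log₂ q − (1 − q + p_e) log₂ (1 − q + p_e)` for `p_e ≤ q`, and `0` otherwise. -/
theorem binary_ppf_avg (q pe : ℝ) (hq : q ∈ Set.Ioo (0 : ℝ) 1) (hpe : 0 ≤ pe) :
    (pe ≤ q →
      ppfAvg b2r (bern q) pe =
        pe * Real.logb 2 pe - q * Real.logb 2 q
          - (1 - q + pe) * Real.logb 2 (1 - q + pe)) ∧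
    (q < pe → ppfAvg b2r (bern q) pe = 0) := by
  obtain ⟨hq0, hq1⟩ := hq
  set F : ℝ → ℝ := fun t => t * Real.logb 2 t - q * Real.logb 2 q
      - (1 - q + t) * Real.logb 2 (1 - q + t) with hF
  have hFanti := F_anti q hq1
  -- value of chanMI for any admissible channel
  have hval : ∀ K : Bool → Bool → ℝ, IsChannel b2r K →
      chanMI (bern q) K = F (avgDraw b2r (bern q) K) ∧
      0 ≤ avgDraw b2r (bern q) K ∧ avgDraw b2r (bern q) K ≤ q := by
    intro K hK
    obtain ⟨h1, h2, h3, h4, h5⟩ := chan_facts K hK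
    rw [avgDraw_eq q K h1, chanMI_eq q K h1 h2 h3]
    refine ⟨rfl, by positivity, ?_⟩
    nlinarith
  have hFq : F q = 0 := by
    simp [hF]
  constructor
  · intro hpeq
    -- achieving channel with ε = pe / q
    set K0 : Bool → Bool → ℝ := fun x y =>
      if x then (if y then 1 - pe / q else pe / q) else (if y then 0 else 1) with hK0def
    have hpq0 : 0 ≤ pe / q := div_nonneg hpe hq0.le
    have hpq1 : pe / q ≤ 1 := (div_le_one hq0).mpr hpeq
    have hch : IsChannel b2r K0 := by
      refine ⟨?_, ?_, ?_⟩
      · intro x y; cases x <;> cases y <;> simp [hK0def] <;> linarith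
      · intro x; cases x <;> simp [hK0def, Fintype.sum_bool]
      · intro x y h; cases x <;> cases y <;> simp [hK0def, b2r] at h ⊢
    have h1 : K0 false true = 0 := by simp [hK0def]
    have havg : avgDraw b2r (bern q) K0 = pe := by
      rw [avgDraw_eq q K0 h1]
      simp [hK0def]
      field_simp
    have hmem : F pe ∈ {r | ∃ K : Bool → Bool → ℝ, IsChannel b2r K ∧
        0 ≤ avgDraw b2r (bern q) K ∧ avgDraw b2r (bern q) K ≤ pe ∧
        r = chanMI (bern q) K} := by
      refine ⟨K0, hch, ?_, ?_, ?_⟩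
      · rw [havg]; exact hpe
      · rw [havg]
      · rw [(hval K0 hch).1, havg]
    have hlb : ∀ r ∈ {r | ∃ K : Bool → Bool → ℝ, IsChannel b2r K ∧
        0 ≤ avgDraw b2r (bern q) K ∧ avgDraw b2r (bern q) K ≤ pe ∧
        r = chanMI (bern q) K}, F pe ≤ r := by
      rintro r ⟨K, hK, h0, hle, rfl⟩
      obtain ⟨heq, ha0, haq⟩ := hval K hK
      rw [heq]
      exact hFanti ⟨ha0, by linarith⟩ ⟨hpe, by linarith⟩ hle
    have : ppfAvg b2r (bern q) pe = F pe := by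
      apply le_antisymm
      · exact csInf_le ⟨F pe, hlb⟩ hmem
      · exact le_csInf ⟨F pe, hmem⟩ hlb
    rw [this]
  · intro hqpe
    -- achieving channel: everything maps to 0
    set K1 : Bool → Bool → ℝ := fun _ y => if y then 0 else 1 with hK1def
    have hch : IsChannel b2r K1 := by
      refine ⟨?_, ?_, ?_⟩
      · intro x y; cases x <;> cases y <;> simp [hK1def]
      · intro x; cases x <;> simp [hK1def, Fintype.sum_bool]
      · intro x y h; cases x <;> cases y <;> simp [hK1def, b2r] at h ⊢
    have h1 : K1 false true = 0 := by simp [hK1def]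
    have havg : avgDraw b2r (bern q) K1 = q := by
      rw [avgDraw_eq q K1 h1]; simp [hK1def]
    have hmem : (0:ℝ) ∈ {r | ∃ K : Bool → Bool → ℝ, IsChannel b2r K ∧
        0 ≤ avgDraw b2r (bern q) K ∧ avgDraw b2r (bern q) K ≤ pe ∧
        r = chanMI (bern q) K} := by
      refine ⟨K1, hch, ?_, ?_, ?_⟩
      · rw [havg]; exact hq0.le
      · rw [havg]; linarith
      · rw [(hval K1 hch).1, havg, hFq]
    have hlb : ∀ r ∈ {r | ∃ K : Bool → Bool → ℝ, IsChannel b2r K ∧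
        0 ≤ avgDraw b2r (bern q) K ∧ avgDraw b2r (bern q) K ≤ pe ∧
        r = chanMI (bern q) K}, (0:ℝ) ≤ r := by
      rintro r ⟨K, hK, h0, hle, rfl⟩
      obtain ⟨heq, ha0, haq⟩ := hval K hK
      rw [heq, ← hFq]
      exact hFanti ⟨ha0, by linarith⟩ ⟨hq0.le, hq1.le⟩ haq
    apply le_antisymm
    · exact csInf_le ⟨0, hlb⟩ hmem
    · exact le_csInf ⟨0, hmem⟩ hlb
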